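/- arXiv:2409.18598 — 2 statements merged into one kernel-verified Lean document; each statement's English description precedes it below -/
import Mathlib

section
/- Let G be an outerplanar graph with a universal vertex u' (adjacent to all other vertices). Then the subgraph induced on V(G) \ {u'} is a disjoint union of paths. -/
open SimpleGraph Matrix

/-- `H` is a minor of `G`: branch sets are connected, pairwise disjoint, and
edges of `H` are represented by edges between branch sets. -/
def MinorOf {α : Type*} {β : Type*} (H : SimpleGraph α) (G : SimpleGraph β) : Prop :=
  ∃ f : α → Set β,
    (∀ a, (G.induce (f a)).Connected) ∧
    (Pairwise fun a b => Disjoint (f a) (f b)) ∧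
    ∀ a b, H.Adj a b → ∃ u ∈ f a, ∃ v ∈ f b, G.Adj u v

/-- A graph is outerplanar iff it has no `K₄`-minor and no `K_{2,3}`-minor. -/
def Outerplanar {β : Type*} (G : SimpleGraph β) : Prop :=
  ¬ MinorOf (completeGraph (Fin 4)) G ∧ ¬ MinorOf (completeBipartiteGraph (Fin 2) (Fin 3)) G

/-- The join `G ∨ H` of two graphs. -/
def graphJoin {α β : Type*} (G : SimpleGraph α) (H : SimpleGraph β) : SimpleGraph (α ⊕ β) where
  Adj x y :=
    match x, y with
    | Sum.inl a, Sum.inl b => G.Adj a b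
    | Sum.inr a, Sum.inr b => H.Adj a b
    | Sum.inl _, Sum.inr _ => True
    | Sum.inr _, Sum.inl _ => True
  symm := by constructor; rintro (a|a) (b|b) h <;> first | exact h.symm | trivial
  loopless := by
    constructor
    rintro (a|a) h
    · exact G.loopless.irrefl a h
    · exact H.loopless.irrefl a h

open scoped Classical in
/-- The adjacency spectral radius of a finite graph. -/
noncomputable def specRad {V : Type*} [Fintype V] [DecidableEq V]
    (G : SimpleGraph V) : ℝ :=
  sSup (spectrum ℝ (G.adjMatrix ℝ))

/-- The disjoint union of paths with orders given by the list `L`. -/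
def pathsUnion (L : List ℕ) : SimpleGraph (Σ i : Fin L.length, Fin (L.get i)) where
  Adj x y := x.1 = y.1 ∧ (x.2.val + 1 = y.2.val ∨ y.2.val + 1 = x.2.val)
  symm := by constructor; rintro ⟨i, a⟩ ⟨j, b⟩ ⟨h1, h2⟩; exact ⟨h1.symm, h2.symm⟩
  loopless := by constructor; rintro ⟨i, a⟩ ⟨-, h⟩; rcases h with h | h <;> omega

/-- `B_{tl}`: `t` edge-disjoint `l`-cycles sharing exactly one common vertex (`none`). -/
def bouquet (t l : ℕ) : SimpleGraph (Option (Fin t × Fin (l - 1))) where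
  Adj x y :=
    match x, y with
    | none, none => False
    | none, some p => p.2.val = 0 ∨ p.2.val = l - 2
    | some p, none => p.2.val = 0 ∨ p.2.val = l - 2
    | some p, some q => p.1 = q.1 ∧ (p.2.val + 1 = q.2.val ∨ q.2.val + 1 = p.2.val)
  symm := by
    constructor
    rintro (_|p) (_|q) h
    · exact h
    · exact h
    · exact h
    · exact ⟨h.1.symm, h.2.symm⟩
  loopless := by
    constructor
    rintro (_|p) h
    · exact h
    · rcases h.2 with h' | h' <;> omega

/-- `F` occurs as a subgraph of `G`. -/
def ContainsSubgraph {α β : Type*} (F : SimpleGraph α) (G : SimpleGraph β) : Prop :=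
  ∃ f : F →g G, Function.Injective f

/-- `G` has a matching of size `k`. -/
def HasMatching {V : Type*} (G : SimpleGraph V) (k : ℕ) : Prop :=
  ∃ M : Finset (Sym2 V), M.card = k ∧ ↑M ⊆ G.edgeSet ∧
    (M : Set (Sym2 V)).Pairwise fun e f => ∀ v, v ∈ e → v ∉ f

/-- A linear forest: a disjoint union of (possibly trivial) paths. -/
def IsLinearForest {V : Type*} (H : SimpleGraph V) : Prop :=
  H.IsAcyclic ∧ ∀ v, (H.neighborSet v).ncard ≤ 2

/-- `G` contains a cycle of length `l`. -/
def HasCycleLength {V : Type*} (G : SimpleGraph V) (l : ℕ) : Prop :=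
  ∃ (u : V) (w : G.Walk u u), w.IsCycle ∧ w.length = l
lemma induce_singleton_connected {V : Type*} (G : SimpleGraph V) (x : V) :
    (G.induce {x}).Connected := by
  constructor
  rintro ⟨a, ha⟩ ⟨b, hb⟩
  simp only [Set.mem_singleton_iff] at ha hb
  subst ha; subst hb
  exact Reachable.refl _

theorem outerplanar_universal_linear_forest {V : Type*} [Fintype V] (G : SimpleGraph V)
    (hG : Outerplanar G) (u' : V) (huniv : ∀ v, v ≠ u' → G.Adj u' v) :
    IsLinearForest (G.induce {v : V | v ≠ u'}) := by
  set s : Set V := {v : V | v ≠ u'} with hs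
  constructor
  · -- acyclic
    intro a w hw
    have key : ∃ (va : V) (w' : G.Walk va va), w'.IsCycle ∧ ∀ x ∈ w'.support, x ≠ u' := by
      refine ⟨(a : V), w.map (SimpleGraph.Embedding.induce s).toHom,
        hw.map Subtype.val_injective, ?_⟩
      intro x hx
      have hx := (Walk.support_map (SimpleGraph.Embedding.induce s).toHom w) ▸ hx
      obtain ⟨y, hy, rfl⟩ := List.mem_map.mp hx
      exact y.2
    obtain ⟨va, w', hw', hsupp⟩ := key
    match w' with
    | .nil => exact hw'.ne_nil rfl
    | .cons h .nil => simp at h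
    | .cons h (.cons h' .nil) =>
      have := hw'.three_le_length; simp at this
    | @Walk.cons _ _ _ b _ h (@Walk.cons _ _ _ c _ h' (.cons h'' r')) =>
      obtain ⟨d, q, e, hqe⟩ := Walk.exists_cons_eq_concat h'' r'
      rw [hqe] at hw' hsupp
      have hnd := hw'.support_nodup
      rw [Walk.support_cons, Walk.support_cons, Walk.support_concat, List.tail_cons,
        List.nodup_cons, List.mem_append, List.nodup_append] at hnd
      have hbq : b ∉ q.support := fun hx => hnd.1 (Or.inl hx)
      have hba : b ≠ va := fun hx => hnd.1 (Or.inr (by simp [hx]))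
      have haq : va ∉ q.support := fun hx => hnd.2.2.2 va hx va (List.mem_singleton_self va) rfl
      have hne_u : ∀ x, x ∈ (Walk.cons h (Walk.cons h' (q.concat e))).support → x ≠ u' := hsupp
      have hva_ne : va ≠ u' := hne_u va (Walk.start_mem_support _)
      have hb_ne : b ≠ u' := by
        apply hne_u
        rw [Walk.support_cons]
        exact List.mem_cons_of_mem _ (Walk.start_mem_support _)
      have hq_mem : ∀ x ∈ q.support, x ∈ (Walk.cons h (Walk.cons h' (q.concat e))).support := by
        intro x hx
        rw [Walk.support_cons, Walk.support_cons, Walk.support_concat]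
        exact List.mem_cons_of_mem _ (List.mem_cons_of_mem _ (List.mem_append.2 (Or.inl hx)))
      have hq_ne : ∀ x ∈ q.support, x ≠ u' := fun x hx => hne_u x (hq_mem x hx)
      have hcq : c ∈ q.support := q.start_mem_support
      have hdq : d ∈ q.support := q.end_mem_support
      have hu'q : u' ∉ q.support := fun hx => hq_ne u' hx rfl
      have hvab : va ≠ b := h.ne
      apply hG.1
      refine ⟨![{u'}, {va}, {b}, {x | x ∈ q.support}], ?_, ?_, ?_⟩
      · intro i
        fin_cases i
        · exact induce_singleton_connected G u'
        · exact induce_singleton_connected G va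
        · exact induce_singleton_connected G b
        · exact q.connected_induce_support
      · intro i j hij
        fin_cases i <;> fin_cases j <;>
          first
          | exact absurd rfl hij
          | exact Set.disjoint_singleton.mpr (Ne.symm hva_ne)
          | exact Set.disjoint_singleton.mpr hva_ne
          | exact Set.disjoint_singleton.mpr (Ne.symm hb_ne)
          | exact Set.disjoint_singleton.mpr hb_ne
          | exact Set.disjoint_singleton.mpr hvab
          | exact Set.disjoint_singleton.mpr (Ne.symm hvab)
          | exact Set.disjoint_singleton_left.mpr hu'q
          | exact Set.disjoint_singleton_right.mpr hu'q
          | exact Set.disjoint_singleton_left.mpr haq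
          | exact Set.disjoint_singleton_right.mpr haq
          | exact Set.disjoint_singleton_left.mpr hbq
          | exact Set.disjoint_singleton_right.mpr hbq
      · intro i j hij
        fin_cases i <;> fin_cases j <;>
          first
          | exact absurd rfl hij
          | exact ⟨u', rfl, va, rfl, huniv va hva_ne⟩
          | exact ⟨u', rfl, b, rfl, huniv b hb_ne⟩
          | exact ⟨u', rfl, c, hcq, huniv c (hq_ne c hcq)⟩
          | exact ⟨va, rfl, u', rfl, (huniv va hva_ne).symm⟩
          | exact ⟨b, rfl, u', rfl, (huniv b hb_ne).symm⟩
          | exact ⟨c, hcq, u', rfl, (huniv c (hq_ne c hcq)).symm⟩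
          | exact ⟨va, rfl, b, rfl, h⟩
          | exact ⟨b, rfl, va, rfl, h.symm⟩
          | exact ⟨va, rfl, d, hdq, e.symm⟩
          | exact ⟨d, hdq, va, rfl, e⟩
          | exact ⟨b, rfl, c, hcq, h'⟩
          | exact ⟨c, hcq, b, rfl, h'.symm⟩
  · -- max degree 2
    intro v
    by_contra hdeg
    push_neg at hdeg
    rw [Set.two_lt_ncard (Set.toFinite _)] at hdeg
    obtain ⟨w1, hw1, w2, hw2, w3, hw3, h12, h13, h23⟩ := hdeg
    rw [mem_neighborSet, comap_adj] at hw1 hw2 hw3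
    apply hG.2
    refine ⟨Sum.elim ![{(v : V)}, {u'}] ![{(w1 : V)}, {(w2 : V)}, {(w3 : V)}], ?_, ?_, ?_⟩
    · rintro (i | i) <;> fin_cases i <;> exact induce_singleton_connected G _
    · rintro (i | i) (j | j) hij <;> fin_cases i <;> fin_cases j <;>
        first
        | exact absurd rfl hij
        | exact Set.disjoint_singleton.mpr v.2
        | exact Set.disjoint_singleton.mpr (Ne.symm v.2)
        | exact Set.disjoint_singleton.mpr hw1.ne
        | exact Set.disjoint_singleton.mpr hw1.ne'
        | exact Set.disjoint_singleton.mpr hw2.ne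
        | exact Set.disjoint_singleton.mpr hw2.ne'
        | exact Set.disjoint_singleton.mpr hw3.ne
        | exact Set.disjoint_singleton.mpr hw3.ne'
        | exact Set.disjoint_singleton.mpr w1.2
        | exact Set.disjoint_singleton.mpr (Ne.symm w1.2)
        | exact Set.disjoint_singleton.mpr w2.2
        | exact Set.disjoint_singleton.mpr (Ne.symm w2.2)
        | exact Set.disjoint_singleton.mpr w3.2
        | exact Set.disjoint_singleton.mpr (Ne.symm w3.2)
        | exact Set.disjoint_singleton.mpr (fun hh => h12 (Subtype.ext hh))
        | exact Set.disjoint_singleton.mpr (fun hh => h12 (Subtype.ext hh.symm))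
        | exact Set.disjoint_singleton.mpr (fun hh => h13 (Subtype.ext hh))
        | exact Set.disjoint_singleton.mpr (fun hh => h13 (Subtype.ext hh.symm))
        | exact Set.disjoint_singleton.mpr (fun hh => h23 (Subtype.ext hh))
        | exact Set.disjoint_singleton.mpr (fun hh => h23 (Subtype.ext hh.symm))
    · rintro (i | i) (j | j) hij <;> fin_cases i <;> fin_cases j <;>
        first
        | exact ⟨_, rfl, _, rfl, hw1⟩
        | exact ⟨_, rfl, _, rfl, hw2⟩
        | exact ⟨_, rfl, _, rfl, hw3⟩
        | exact ⟨_, rfl, _, rfl, huniv _ w1.2⟩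
        | exact ⟨_, rfl, _, rfl, huniv _ w2.2⟩
        | exact ⟨_, rfl, _, rfl, huniv _ w3.2⟩
        | exact ⟨_, rfl, _, rfl, hw1.symm⟩
        | exact ⟨_, rfl, _, rfl, hw2.symm⟩
        | exact ⟨_, rfl, _, rfl, hw3.symm⟩
        | exact ⟨_, rfl, _, rfl, (huniv _ w1.2).symm⟩
        | exact ⟨_, rfl, _, rfl, (huniv _ w2.2).symm⟩
        | exact ⟨_, rfl, _, rfl, (huniv _ w3.2).symm⟩
        | exact absurd hij (by simp)
end

section
/- Let t ≥ 3, ℓ ≥ 3, and let H be a disjoint union of paths with path orders n₁ ≥ n₂ ≥ ⋯. If K_2 ∨ H contains no B_{tℓ}, then n₁ + n₂ ≤ (t-1)(ℓ-1) + ℓ - 3. -/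
open SimpleGraph Matrix

lemma bouquet_adj' {t l : ℕ} {p q : Fin t × Fin (l-1)} :
    (bouquet t l).Adj (some p) (some q) ↔
      p.1 = q.1 ∧ (p.2.val + 1 = q.2.val ∨ q.2.val + 1 = p.2.val) := Iff.rfl

lemma join_inl_inr' {α β : Type*} (G : SimpleGraph α) (H : SimpleGraph β) (a : α) (b : β) :
    (graphJoin G H).Adj (Sum.inl a) (Sum.inr b) := trivial

lemma join_inr_inl' {α β : Type*} (G : SimpleGraph α) (H : SimpleGraph β) (a : β) (b : α) :
    (graphJoin G H).Adj (Sum.inr a) (Sum.inl b) := trivial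

lemma join_inr_inr' {α β : Type*} (G : SimpleGraph α) (H : SimpleGraph β) {a b : β} :
    (graphJoin G H).Adj (Sum.inr a) (Sum.inr b) ↔ H.Adj a b := Iff.rfl

lemma join_inl_inl' {α β : Type*} (G : SimpleGraph α) (H : SimpleGraph β) {a b : α} :
    (graphJoin G H).Adj (Sum.inl a) (Sum.inl b) ↔ G.Adj a b := Iff.rfl

lemma pathsUnion_adj' {L : List ℕ} {x y : Σ i : Fin L.length, Fin (L.get i)} :
    (pathsUnion L).Adj x y ↔ x.1 = y.1 ∧ (x.2.val + 1 = y.2.val ∨ y.2.val + 1 = x.2.val) := Iff.rfl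

lemma seg_lt' {i a k j r n : ℕ} (hi : i < a) (hj : j < k) (h : a * k + r = n) :
    i * k + j < n := by
  have h1 : (i+1) * k ≤ a * k := Nat.mul_le_mul_right k hi
  have h2 : i * k + k = (i+1)*k := by ring
  omega

lemma seg_inj' {k i j i' j' : ℕ} (hj : j < k) (hj' : j' < k)
    (h : i * k + j = i' * k + j') : i = i' ∧ j = j' := by
  have h1 : (i * k + j) / k = i := by
    rw [mul_comm, Nat.mul_add_div (by omega)]
    simp [Nat.div_eq_of_lt hj]
  have h2 : (i' * k + j') / k = i' := by
    rw [mul_comm, Nat.mul_add_div (by omega)]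
    simp [Nat.div_eq_of_lt hj']
  have he : i = i' := by rw [← h1, ← h2, h]
  subst he
  omega

theorem btl_free_K2_join (t l : ℕ) (ht : 3 ≤ t) (hl : 3 ≤ l) (n₁ n₂ : ℕ) (rest : List ℕ)
    (hsorted : (n₁ :: n₂ :: rest).Pairwise (· ≥ ·)) (hpos : ∀ m ∈ n₁ :: n₂ :: rest, 1 ≤ m)
    (hfree : ¬ ContainsSubgraph (bouquet t l)
      (graphJoin (completeGraph (Fin 2)) (pathsUnion (n₁ :: n₂ :: rest)))) :
    n₁ + n₂ ≤ (t - 1) * (l - 1) + l - 3 := by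
  by_contra hcon
  push_neg at hcon
  obtain ⟨k, rfl⟩ : ∃ k, l = k + 1 := ⟨l - 1, by omega⟩
  have hk : 2 ≤ k := by omega
  have hn₁ : 0 < n₁ := hpos n₁ (by simp)
  have hn₂ : 0 < n₂ := hpos n₂ (by simp)
  have hsum : (t - 1) * k + (k - 1) ≤ n₁ + n₂ := by
    have h1 : k + 1 - 1 = k := rfl
    rw [h1] at hcon
    omega
  set a := n₁ / k with ha
  set b := n₂ / k with hb
  set r₁ := n₁ % k with hr1def
  set r₂ := n₂ % k with hr2def
  have hA : a * k + r₁ = n₁ := by rw [ha, hr1def, mul_comm]; exact Nat.div_add_mod n₁ k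
  have hB : b * k + r₂ = n₂ := by rw [hb, hr2def, mul_comm]; exact Nat.div_add_mod n₂ k
  have hr₁k : r₁ < k := by rw [hr1def]; exact Nat.mod_lt _ (by omega)
  have hr₂k : r₂ < k := by rw [hr2def]; exact Nat.mod_lt _ (by omega)
  have habk : (a + b) * k = a * k + b * k := add_mul a b k
  have htab : t - 1 ≤ a + b := by
    have e2 : (t - 1) * k = (t - 2) * k + k := by
      have e3 : t - 1 = (t - 2) + 1 := by omega
      rw [e3, add_mul, one_mul]
    have h1 : (t - 2) * k < (a + b) * k := by omega
    have h2 : t - 2 < a + b := lt_of_mul_lt_mul_right h1 (Nat.zero_le k)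
    omega
  set s₁ := min r₁ (k - 1) with hs₁def
  have hs₁r : s₁ ≤ r₁ := min_le_left _ _
  have hs₁k : s₁ ≤ k - 1 := min_le_right _ _
  have key : ∀ i : ℕ, a + b ≤ i → i < t →
      a + b = t - 1 ∧ k - 1 ≤ r₁ + r₂ ∧ k - 1 - s₁ ≤ r₂ := by
    intro i h1 h2
    have e : a + b = t - 1 := by omega
    have e2 : (a + b) * k = (t - 1) * k := by rw [e]
    have h4 : k - 1 ≤ r₁ + r₂ := by omega
    refine ⟨e, h4, ?_⟩
    rcases le_total r₁ (k - 1) with h | h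
    · have hs : s₁ = r₁ := min_eq_left h
      omega
    · have hs : s₁ = k - 1 := min_eq_right h
      omega
  have h0len : 0 < (n₁ :: n₂ :: rest).length := by simp
  have h1len : 1 < (n₁ :: n₂ :: rest).length := by simp
  have cg01 : (completeGraph (Fin 2)).Adj 0 1 := by
    show (0 : Fin 2) ≠ 1; decide
  have cg10 : (completeGraph (Fin 2)).Adj 1 0 := by
    show (1 : Fin 2) ≠ 0; decide
  apply hfree
  refine ⟨⟨fun x => match x with
    | none => Sum.inl 0
    | some p =>
      if p.1.val < a then
        Sum.inr ⟨⟨0, h0len⟩, ⟨(p.1.val * k + p.2.val) % n₁, Nat.mod_lt _ hn₁⟩⟩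
      else if p.1.val < a + b then
        Sum.inr ⟨⟨1, h1len⟩, ⟨((p.1.val - a) * k + p.2.val) % n₂, Nat.mod_lt _ hn₂⟩⟩
      else if p.2.val < s₁ then
        Sum.inr ⟨⟨0, h0len⟩, ⟨(a * k + p.2.val) % n₁, Nat.mod_lt _ hn₁⟩⟩
      else if p.2.val = s₁ then Sum.inl 1
      else
        Sum.inr ⟨⟨1, h1len⟩, ⟨(b * k + (p.2.val - s₁ - 1)) % n₂, Nat.mod_lt _ hn₂⟩⟩, ?_⟩, ?_⟩
  · -- graph homomorphism
    rintro (_ | ⟨i, j⟩) (_ | ⟨i', j'⟩) hxy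
    · exact False.elim hxy
    · -- hub to cycle vertex
      dsimp only
      split_ifs
      · exact join_inl_inr' _ _ _ _
      · exact join_inl_inr' _ _ _ _
      · exact join_inl_inr' _ _ _ _
      · exact (join_inl_inl' _ _).mpr cg01
      · exact join_inl_inr' _ _ _ _
    · -- cycle vertex to hub
      dsimp only
      split_ifs
      · exact join_inr_inl' _ _ _ _
      · exact join_inr_inl' _ _ _ _
      · exact join_inr_inl' _ _ _ _
      · exact (join_inl_inl' _ _).mpr cg10
      · exact join_inr_inl' _ _ _ _
    · -- within a cycle
      rw [bouquet_adj'] at hxy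
      obtain ⟨hii, hjj⟩ := hxy
      have hii' : i = i' := hii
      subst hii'
      have hjj' : j.val + 1 = j'.val ∨ j'.val + 1 = j.val := hjj
      dsimp only
      have hjk : j.val < k := j.isLt
      have hjk' : j'.val < k := j'.isLt
      by_cases c1 : i.val < a
      · simp only [if_pos c1]
        have hb1 : i.val * k + j.val < n₁ := seg_lt' c1 hjk hA
        have hb2 : i.val * k + j'.val < n₁ := seg_lt' c1 hjk' hA
        rw [join_inr_inr', pathsUnion_adj']
        dsimp only
        refine ⟨rfl, ?_⟩
        rw [Nat.mod_eq_of_lt hb1, Nat.mod_eq_of_lt hb2]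
        omega
      · by_cases c2 : i.val < a + b
        · simp only [if_neg c1, if_pos c2]
          have hd : i.val - a < b := by omega
          have hb1 : (i.val - a) * k + j.val < n₂ := seg_lt' hd hjk hB
          have hb2 : (i.val - a) * k + j'.val < n₂ := seg_lt' hd hjk' hB
          rw [join_inr_inr', pathsUnion_adj']
          dsimp only
          refine ⟨rfl, ?_⟩
          rw [Nat.mod_eq_of_lt hb1, Nat.mod_eq_of_lt hb2]
          omega
        · obtain ⟨he, hrr, hs₂r⟩ := key i.val (by omega) i.isLt
          simp only [if_neg c1, if_neg c2]
          rcases hjj' with hj | hj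
          · -- j' = j + 1
            by_cases c3' : j'.val < s₁
            · have c3 : j.val < s₁ := by omega
              simp only [if_pos c3, if_pos c3']
              have hb1 : a * k + j.val < n₁ := by omega
              have hb2 : a * k + j'.val < n₁ := by omega
              rw [join_inr_inr', pathsUnion_adj']
              dsimp only
              refine ⟨rfl, ?_⟩
              rw [Nat.mod_eq_of_lt hb1, Nat.mod_eq_of_lt hb2]
              omega
            · by_cases c4' : j'.val = s₁
              · have c3 : j.val < s₁ := by omega
                simp only [if_pos c3, if_neg c3', if_pos c4']
                exact join_inr_inl' _ _ _ _
              · by_cases c3 : j.val < s₁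
                · exfalso; omega
                · by_cases c4 : j.val = s₁
                  · simp only [if_neg c3, if_pos c4, if_neg c3', if_neg c4']
                    exact join_inl_inr' _ _ _ _
                  · simp only [if_neg c3, if_neg c4, if_neg c3', if_neg c4']
                    have hb1 : b * k + (j.val - s₁ - 1) < n₂ := by omega
                    have hb2 : b * k + (j'.val - s₁ - 1) < n₂ := by omega
                    rw [join_inr_inr', pathsUnion_adj']
                    dsimp only
                    refine ⟨rfl, ?_⟩
                    rw [Nat.mod_eq_of_lt hb1, Nat.mod_eq_of_lt hb2]
                    omega
          · -- j = j' + 1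
            by_cases c3 : j.val < s₁
            · have c3' : j'.val < s₁ := by omega
              simp only [if_pos c3, if_pos c3']
              have hb1 : a * k + j.val < n₁ := by omega
              have hb2 : a * k + j'.val < n₁ := by omega
              rw [join_inr_inr', pathsUnion_adj']
              dsimp only
              refine ⟨rfl, ?_⟩
              rw [Nat.mod_eq_of_lt hb1, Nat.mod_eq_of_lt hb2]
              omega
            · by_cases c4 : j.val = s₁
              · have c3' : j'.val < s₁ := by omega
                simp only [if_neg c3, if_pos c4, if_pos c3']
                exact join_inl_inr' _ _ _ _
              · by_cases c4' : j'.val = s₁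
                · have c3'n : ¬ j'.val < s₁ := by omega
                  simp only [if_neg c3, if_neg c4, if_neg c3'n, if_pos c4']
                  exact join_inr_inl' _ _ _ _
                · by_cases c3' : j'.val < s₁
                  · exfalso; omega
                  · simp only [if_neg c3, if_neg c4, if_neg c3', if_neg c4']
                    have hb1 : b * k + (j.val - s₁ - 1) < n₂ := by omega
                    have hb2 : b * k + (j'.val - s₁ - 1) < n₂ := by omega
                    rw [join_inr_inr', pathsUnion_adj']
                    dsimp only
                    refine ⟨rfl, ?_⟩
                    rw [Nat.mod_eq_of_lt hb1, Nat.mod_eq_of_lt hb2]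
                    omega
  · -- injectivity
    intro x y h
    dsimp only [DFunLike.coe, RelHom.instFunLike] at h
    rcases x with _ | ⟨i, j⟩ <;> rcases y with _ | ⟨i', j'⟩
    · rfl
    · dsimp only at h
      split_ifs at h <;>
        first
          | exact (Sum.inl_ne_inr h).elim
          | exact absurd (Sum.inl.inj h) (by decide)
    · dsimp only at h
      split_ifs at h <;>
        first
          | exact (Sum.inr_ne_inl h).elim
          | exact absurd (Sum.inl.inj h) (by decide)
    · dsimp only at h
      have hjk : j.val < k := j.isLt
      have hjk' : j'.val < k := j'.isLt
      have hit : i.val < t := i.isLt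
      have hit' : i'.val < t := i'.isLt
      have mk_eq : i.val = i'.val → j.val = j'.val → some (i, j) = some (i', j') := by
        intro e1 e2
        simp only [Option.some.injEq, Prod.mk.injEq]
        exact ⟨Fin.ext e1, Fin.ext e2⟩
      by_cases c1 : i.val < a
      · by_cases c1' : i'.val < a
        · -- A, A
          simp only [if_pos c1, if_pos c1'] at h
          simp only [Sum.inr.injEq, Sigma.mk.inj_iff, Fin.mk.injEq, heq_eq_eq,
            eq_self_iff_true, true_and] at h
          have hb1 : i.val * k + j.val < n₁ := seg_lt' c1 hjk hA
          have hb2 : i'.val * k + j'.val < n₁ := seg_lt' c1' hjk' hA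
          rw [Nat.mod_eq_of_lt hb1, Nat.mod_eq_of_lt hb2] at h
          obtain ⟨e1, e2⟩ := seg_inj' hjk hjk' h
          exact mk_eq e1 e2
        · by_cases c2' : i'.val < a + b
          · -- A, B
            simp only [if_pos c1, if_neg c1', if_pos c2'] at h
            simp only [Sum.inr.injEq, Sigma.mk.inj_iff, Fin.mk.injEq] at h
            exact absurd h.1 (by decide)
          · obtain ⟨he, hrr, hs₂r⟩ := key i'.val (by omega) hit'
            by_cases c3' : j'.val < s₁
            · -- A, C1
              simp only [if_pos c1, if_neg c1', if_neg c2', if_pos c3'] at h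
              simp only [Sum.inr.injEq, Sigma.mk.inj_iff, Fin.mk.injEq, heq_eq_eq,
                eq_self_iff_true, true_and] at h
              have hb1 : i.val * k + j.val < n₁ := seg_lt' c1 hjk hA
              have hb2 : a * k + j'.val < n₁ := by omega
              rw [Nat.mod_eq_of_lt hb1, Nat.mod_eq_of_lt hb2] at h
              have hlt : i.val * k + j.val < a * k := seg_lt' c1 hjk (show a * k + 0 = a * k from rfl)
              exfalso; omega
            · by_cases c4' : j'.val = s₁
              · -- A, M
                simp only [if_pos c1, if_neg c1', if_neg c2', if_neg c3', if_pos c4'] at h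
                exact (Sum.inr_ne_inl h).elim
              · -- A, C2
                simp only [if_pos c1, if_neg c1', if_neg c2', if_neg c3', if_neg c4'] at h
                simp only [Sum.inr.injEq, Sigma.mk.inj_iff, Fin.mk.injEq] at h
                exact absurd h.1 (by decide)
      · by_cases c2 : i.val < a + b
        · by_cases c1' : i'.val < a
          · -- B, A
            simp only [if_neg c1, if_pos c2, if_pos c1'] at h
            simp only [Sum.inr.injEq, Sigma.mk.inj_iff, Fin.mk.injEq] at h
            exact absurd h.1 (by decide)
          · by_cases c2' : i'.val < a + b
            · -- B, B
              simp only [if_neg c1, if_pos c2, if_neg c1', if_pos c2'] at h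
              simp only [Sum.inr.injEq, Sigma.mk.inj_iff, Fin.mk.injEq, heq_eq_eq,
                eq_self_iff_true, true_and] at h
              have hd : i.val - a < b := by omega
              have hd' : i'.val - a < b := by omega
              have hb1 : (i.val - a) * k + j.val < n₂ := seg_lt' hd hjk hB
              have hb2 : (i'.val - a) * k + j'.val < n₂ := seg_lt' hd' hjk' hB
              rw [Nat.mod_eq_of_lt hb1, Nat.mod_eq_of_lt hb2] at h
              obtain ⟨e1, e2⟩ := seg_inj' hjk hjk' h
              exact mk_eq (by omega) e2
            · obtain ⟨he, hrr, hs₂r⟩ := key i'.val (by omega) hit'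
              by_cases c3' : j'.val < s₁
              · -- B, C1
                simp only [if_neg c1, if_pos c2, if_neg c1', if_neg c2', if_pos c3'] at h
                simp only [Sum.inr.injEq, Sigma.mk.inj_iff, Fin.mk.injEq] at h
                exact absurd h.1 (by decide)
              · by_cases c4' : j'.val = s₁
                · -- B, M
                  simp only [if_neg c1, if_pos c2, if_neg c1', if_neg c2', if_neg c3',
                    if_pos c4'] at h
                  exact (Sum.inr_ne_inl h).elim
                · -- B, C2
                  simp only [if_neg c1, if_pos c2, if_neg c1', if_neg c2', if_neg c3',
                    if_neg c4'] at h
                  simp only [Sum.inr.injEq, Sigma.mk.inj_iff, Fin.mk.injEq, heq_eq_eq,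
                    eq_self_iff_true, true_and] at h
                  have hd : i.val - a < b := by omega
                  have hb1 : (i.val - a) * k + j.val < n₂ := seg_lt' hd hjk hB
                  have hb2 : b * k + (j'.val - s₁ - 1) < n₂ := by omega
                  rw [Nat.mod_eq_of_lt hb1, Nat.mod_eq_of_lt hb2] at h
                  have hlt : (i.val - a) * k + j.val < b * k := seg_lt' hd hjk (show b * k + 0 = b * k from rfl)
                  exfalso; omega
        · obtain ⟨he, hrr, hs₂r⟩ := key i.val (by omega) hit
          by_cases c3 : j.val < s₁
          · -- C1, *
            by_cases c1' : i'.val < a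
            · -- C1, A
              simp only [if_neg c1, if_neg c2, if_pos c3, if_pos c1'] at h
              simp only [Sum.inr.injEq, Sigma.mk.inj_iff, Fin.mk.injEq, heq_eq_eq,
                eq_self_iff_true, true_and] at h
              have hb1 : a * k + j.val < n₁ := by omega
              have hb2 : i'.val * k + j'.val < n₁ := seg_lt' c1' hjk' hA
              rw [Nat.mod_eq_of_lt hb1, Nat.mod_eq_of_lt hb2] at h
              have hlt : i'.val * k + j'.val < a * k := seg_lt' c1' hjk' (show a * k + 0 = a * k from rfl)
              exfalso; omega
            · by_cases c2' : i'.val < a + b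
              · -- C1, B
                simp only [if_neg c1, if_neg c2, if_pos c3, if_neg c1', if_pos c2'] at h
                simp only [Sum.inr.injEq, Sigma.mk.inj_iff, Fin.mk.injEq] at h
                exact absurd h.1 (by decide)
              · by_cases c3' : j'.val < s₁
                · -- C1, C1
                  simp only [if_neg c1, if_neg c2, if_pos c3, if_neg c1', if_neg c2',
                    if_pos c3'] at h
                  simp only [Sum.inr.injEq, Sigma.mk.inj_iff, Fin.mk.injEq, heq_eq_eq,
                    eq_self_iff_true, true_and] at h
                  have hb1 : a * k + j.val < n₁ := by omega
                  have hb2 : a * k + j'.val < n₁ := by omega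
                  rw [Nat.mod_eq_of_lt hb1, Nat.mod_eq_of_lt hb2] at h
                  exact mk_eq (by omega) (by omega)
                · by_cases c4' : j'.val = s₁
                  · -- C1, M
                    simp only [if_neg c1, if_neg c2, if_pos c3, if_neg c1', if_neg c2',
                      if_neg c3', if_pos c4'] at h
                    exact (Sum.inr_ne_inl h).elim
                  · -- C1, C2
                    simp only [if_neg c1, if_neg c2, if_pos c3, if_neg c1', if_neg c2',
                      if_neg c3', if_neg c4'] at h
                    simp only [Sum.inr.injEq, Sigma.mk.inj_iff, Fin.mk.injEq] at h
                    exact absurd h.1 (by decide)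
          · by_cases c4 : j.val = s₁
            · -- M, *
              by_cases c1' : i'.val < a
              · simp only [if_neg c1, if_neg c2, if_neg c3, if_pos c4, if_pos c1'] at h
                exact (Sum.inl_ne_inr h).elim
              · by_cases c2' : i'.val < a + b
                · simp only [if_neg c1, if_neg c2, if_neg c3, if_pos c4, if_neg c1',
                    if_pos c2'] at h
                  exact (Sum.inl_ne_inr h).elim
                · by_cases c3' : j'.val < s₁
                  · simp only [if_neg c1, if_neg c2, if_neg c3, if_pos c4, if_neg c1',
                      if_neg c2', if_pos c3'] at h
                    exact (Sum.inl_ne_inr h).elim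
                  · by_cases c4' : j'.val = s₁
                    · -- M, M
                      exact mk_eq (by omega) (by omega)
                    · simp only [if_neg c1, if_neg c2, if_neg c3, if_pos c4, if_neg c1',
                        if_neg c2', if_neg c3', if_neg c4'] at h
                      exact (Sum.inl_ne_inr h).elim
            · -- C2, *
              by_cases c1' : i'.val < a
              · simp only [if_neg c1, if_neg c2, if_neg c3, if_neg c4, if_pos c1'] at h
                simp only [Sum.inr.injEq, Sigma.mk.inj_iff, Fin.mk.injEq] at h
                exact absurd h.1 (by decide)
              · by_cases c2' : i'.val < a + b
                · -- C2, B
                  simp only [if_neg c1, if_neg c2, if_neg c3, if_neg c4, if_neg c1',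
                    if_pos c2'] at h
                  simp only [Sum.inr.injEq, Sigma.mk.inj_iff, Fin.mk.injEq, heq_eq_eq,
                    eq_self_iff_true, true_and] at h
                  have hd' : i'.val - a < b := by omega
                  have hb1 : b * k + (j.val - s₁ - 1) < n₂ := by omega
                  have hb2 : (i'.val - a) * k + j'.val < n₂ := seg_lt' hd' hjk' hB
                  rw [Nat.mod_eq_of_lt hb1, Nat.mod_eq_of_lt hb2] at h
                  have hlt : (i'.val - a) * k + j'.val < b * k := seg_lt' hd' hjk' (show b * k + 0 = b * k from rfl)
                  exfalso; omega
                · by_cases c3' : j'.val < s₁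
                  · -- C2, C1
                    simp only [if_neg c1, if_neg c2, if_neg c3, if_neg c4, if_neg c1',
                      if_neg c2', if_pos c3'] at h
                    simp only [Sum.inr.injEq, Sigma.mk.inj_iff, Fin.mk.injEq] at h
                    exact absurd h.1 (by decide)
                  · by_cases c4' : j'.val = s₁
                    · -- C2, M
                      simp only [if_neg c1, if_neg c2, if_neg c3, if_neg c4, if_neg c1',
                        if_neg c2', if_neg c3', if_pos c4'] at h
                      exact (Sum.inr_ne_inl h).elim
                    · -- C2, C2
                      simp only [if_neg c1, if_neg c2, if_neg c3, if_neg c4, if_neg c1',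
                        if_neg c2', if_neg c3', if_neg c4'] at h
                      simp only [Sum.inr.injEq, Sigma.mk.inj_iff, Fin.mk.injEq, heq_eq_eq,
                        eq_self_iff_true, true_and] at h
                      have hb1 : b * k + (j.val - s₁ - 1) < n₂ := by omega
                      have hb2 : b * k + (j'.val - s₁ - 1) < n₂ := by omega
                      rw [Nat.mod_eq_of_lt hb1, Nat.mod_eq_of_lt hb2] at h
                      exact mk_eq (by omega) (by omega)
end
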